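/- For h ≥ 1 let B_h : Matrix (Fin h) (Fin h) ℤ be the matrix with B_h 0 0 = 4, B_h 0 j = B_h j 0 = 2 for j ≠ 0, B_h i i = 2 for i ≠ 0, and B_h i j = 1 for distinct nonzero i, j. Then the cokernel (Fin h → ℤ) ⧸ range(mulVec B_h) is isomorphic as an abelian group to ZMod 4 when h is odd, and to ZMod 2 × ZMod 2 when h is even. (Equivalently, B_h has Smith normal form diag(1,…,1,4) for h odd and diag(1,…,1,2,2) for h even.) -/
import Mathlib


/-- The matrix `B_h` of equation (1) of the paper: `B 0 0 = 4`, `B 0 j = B j 0 = 2`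
for `j ≠ 0`, `B i i = 2` for `i ≠ 0`, and `B i j = 1` for distinct nonzero `i, j`. -/
def Bmat (h : ℕ) : Matrix (Fin h) (Fin h) ℤ :=
  Matrix.of fun i j =>
    if i = j then (if (i : ℕ) = 0 then 4 else 2)
    else (if (i : ℕ) = 0 ∨ (j : ℕ) = 0 then 2 else 1)

lemma Bmat_mulVec_zero (n : ℕ) (y : Fin (n+1) → ℤ) :
    (Bmat (n+1)).mulVec y 0 = 4 * y 0 + 2 * ∑ j : Fin n, y j.succ := by
  have h0 : ∀ j : Fin n, ((0 : Fin (n+1)) = j.succ) = False := fun j => by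
    simp [Ne.symm (Fin.succ_ne_zero j)]
  simp [Matrix.mulVec, dotProduct, Bmat, Fin.sum_univ_succ, h0, Finset.mul_sum]

lemma Bmat_mulVec_succ (n : ℕ) (y : Fin (n+1) → ℤ) (k : Fin n) :
    (Bmat (n+1)).mulVec y k.succ = 2 * y 0 + (∑ j : Fin n, y j.succ) + y k.succ := by
  simp only [Matrix.mulVec, dotProduct, Bmat, Matrix.of_apply, Fin.sum_univ_succ]
  have h2 : ∀ x : Fin n,
      (if k.succ = x.succ then (if ((k.succ : Fin (n+1)) : ℕ) = 0 then (4:ℤ) else 2)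
        else if ((k.succ : Fin (n+1)) : ℕ) = 0 ∨ ((x.succ : Fin (n+1)) : ℕ) = 0 then 2 else 1) * y x.succ
      = y x.succ + (if k = x then y x.succ else 0) := fun x => by
    by_cases h : k = x <;> simp [h, Fin.succ_inj, (Fin.succ_ne_zero k), Fin.val_succ] <;> ring
  rw [Finset.sum_congr rfl (fun x _ => h2 x)]
  simp [Finset.sum_add_distrib, Finset.sum_ite_eq, Fin.succ_ne_zero]
  ring

lemma Bmat_mulVec_sum_succ (n : ℕ) (y : Fin (n+1) → ℤ) :
    ∑ j : Fin n, (Bmat (n+1)).mulVec y j.succ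
      = 2*n*(y 0) + (n+1) * ∑ j : Fin n, y j.succ := by
  simp only [Bmat_mulVec_succ, Finset.sum_add_distrib, Finset.sum_const,
    Finset.card_univ, Fintype.card_fin, nsmul_eq_mul]
  ring

noncomputable def tfun (n : ℕ) : (Fin (n+1) → ℤ) →ₗ[ℤ] ℤ :=
  ∑ j : Fin n, LinearMap.proj j.succ

lemma tfun_apply (n : ℕ) (x : Fin (n+1) → ℤ) : tfun n x = ∑ j : Fin n, x j.succ := by
  simp [tfun]

lemma mem_range_of (n : ℕ) (x : Fin (n+1) → ℤ) (c d : ℤ) (hc : x 0 = 2 * c)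
    (hd : (n+1) * c - (∑ j : Fin n, x j.succ) = 2 * d) :
    x ∈ LinearMap.range (Bmat (n+1)).mulVecLin := by
  refine ⟨Fin.cons d (fun k => x k.succ - c), funext fun i => ?_⟩
  have hsum : ∑ j : Fin n, (Fin.cons d (fun k => x k.succ - c) : Fin (n+1) → ℤ) j.succ
      = (∑ j : Fin n, x j.succ) - n * c := by
    simp [Fin.cons_succ, Finset.sum_sub_distrib, mul_comm]
  induction i using Fin.cases with
  | zero =>
    rw [Matrix.mulVecLin_apply, Bmat_mulVec_zero, hsum, Fin.cons_zero, hc]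
    linarith
  | succ k =>
    rw [Matrix.mulVecLin_apply, Bmat_mulVec_succ, hsum, Fin.cons_zero, Fin.cons_succ]
    linarith

noncomputable def phiOdd (n : ℕ) : (Fin (n+1) → ℤ) →ₗ[ℤ] ZMod 4 :=
  (Int.castAddHom (ZMod 4)).toIntLinearMap.comp (LinearMap.proj 0 + 2 • tfun n)

lemma phiOdd_apply (n : ℕ) (x : Fin (n+1) → ℤ) :
    phiOdd n x = ((x 0 + 2 * ∑ j : Fin n, x j.succ : ℤ) : ZMod 4) := by
  simp [phiOdd, tfun_apply]

lemma odd_ker (n m : ℕ) (hn : n = 2*m) :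
    LinearMap.range (Bmat (n+1)).mulVecLin = LinearMap.ker (phiOdd n) := by
  have hn' : (n : ℤ) = 2*m := by exact_mod_cast hn
  ext x
  constructor
  · rintro ⟨y, rfl⟩
    rw [LinearMap.mem_ker, phiOdd_apply]
    rw [Matrix.mulVecLin_apply] at *
    rw [Bmat_mulVec_zero, Bmat_mulVec_sum_succ]
    rw [ZMod.intCast_zmod_eq_zero_iff_dvd]
    exact ⟨(2*m+1) * y 0 + (m+1) * ∑ j : Fin n, y j.succ, by rw [hn']; ring⟩
  · intro hx
    rw [LinearMap.mem_ker, phiOdd_apply, ZMod.intCast_zmod_eq_zero_iff_dvd] at hx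
    obtain ⟨k, hk⟩ := hx
    refine mem_range_of n x (2*k - ∑ j : Fin n, x j.succ)
      (2*m*k + k - (m+1) * ∑ j : Fin n, x j.succ)
      (by push_cast at hk; linarith) (by rw [hn']; ring)

lemma odd_surj (n : ℕ) : Function.Surjective (phiOdd n) := by
  intro z
  obtain ⟨a, rfl⟩ := ZMod.intCast_surjective z
  refine ⟨fun i => if i = 0 then a else 0, ?_⟩
  rw [phiOdd_apply]
  simp [Fin.succ_ne_zero]

lemma odd_case (n m : ℕ) (hn : n = 2*m) :
    Nonempty (((Fin (n+1) → ℤ) ⧸ LinearMap.range (Bmat (n+1)).mulVecLin) ≃+ ZMod 4) :=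
  ⟨((Submodule.quotEquivOfEq _ _ (odd_ker n m hn)).trans
    ((phiOdd n).quotKerEquivOfSurjective (odd_surj n))).toAddEquiv⟩

noncomputable def phiEven (n : ℕ) : (Fin (n+1) → ℤ) →ₗ[ℤ] (ZMod 2 × ZMod 2) :=
  LinearMap.prod
    ((Int.castAddHom (ZMod 2)).toIntLinearMap.comp (LinearMap.proj 0))
    ((Int.castAddHom (ZMod 2)).toIntLinearMap.comp (tfun n))

lemma phiEven_apply (n : ℕ) (x : Fin (n+1) → ℤ) :
    phiEven n x = (((x 0 : ℤ) : ZMod 2), ((∑ j : Fin n, x j.succ : ℤ) : ZMod 2)) := by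
  simp [phiEven, tfun_apply]

lemma even_ker (n m : ℕ) (hn : n = 2*m+1) :
    LinearMap.range (Bmat (n+1)).mulVecLin = LinearMap.ker (phiEven n) := by
  have hn' : (n : ℤ) = 2*m+1 := by exact_mod_cast hn
  ext x
  constructor
  · rintro ⟨y, rfl⟩
    rw [LinearMap.mem_ker, phiEven_apply]
    rw [Matrix.mulVecLin_apply] at *
    rw [Bmat_mulVec_zero, Bmat_mulVec_sum_succ, Prod.mk_eq_zero]
    rw [ZMod.intCast_zmod_eq_zero_iff_dvd, ZMod.intCast_zmod_eq_zero_iff_dvd]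
    constructor
    · exact ⟨2 * y 0 + ∑ j : Fin n, y j.succ, by push_cast; ring⟩
    · exact ⟨n * y 0 + (m+1) * ∑ j : Fin n, y j.succ, by push_cast [hn']; ring⟩
  · intro hx
    rw [LinearMap.mem_ker, phiEven_apply, Prod.mk_eq_zero,
      ZMod.intCast_zmod_eq_zero_iff_dvd, ZMod.intCast_zmod_eq_zero_iff_dvd] at hx
    obtain ⟨⟨k1, hk1⟩, ⟨k2, hk2⟩⟩ := hx
    refine mem_range_of n x k1 ((m+1)*k1 - k2)
      (by push_cast at hk1; linarith) (by push_cast at hk2; rw [hn']; linarith)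

lemma even_surj (n m : ℕ) (hn : n = 2*m+1) : Function.Surjective (phiEven n) := by
  rintro ⟨z1, z2⟩
  obtain ⟨a, rfl⟩ := ZMod.intCast_surjective z1
  obtain ⟨b, rfl⟩ := ZMod.intCast_surjective z2
  refine ⟨fun i => if i = 0 then a else b, ?_⟩
  rw [phiEven_apply]
  have : ∑ j : Fin n, (if (j.succ : Fin (n+1)) = 0 then a else b) = n * b := by
    simp [Fin.succ_ne_zero, Finset.sum_const, Finset.card_univ]
  simp only [if_pos rfl, this]
  have h2 : ((n : ℤ) * b : ℤ) = 2 * (m * b) + b := by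
    have : (n : ℤ) = 2*m+1 := by exact_mod_cast hn
    rw [this]; ring
  rw [h2]
  push_cast
  simp [show (2:ZMod 2) = 0 from rfl]

lemma even_case (n m : ℕ) (hn : n = 2*m+1) :
    Nonempty (((Fin (n+1) → ℤ) ⧸ LinearMap.range (Bmat (n+1)).mulVecLin)
      ≃+ (ZMod 2 × ZMod 2)) :=
  ⟨((Submodule.quotEquivOfEq _ _ (even_ker n m hn)).trans
    ((phiEven n).quotKerEquivOfSurjective (even_surj n m hn))).toAddEquiv⟩

/-- the cokernel of `B_h` is `ℤ/4` when `h` is odd and `ℤ/2 × ℤ/2` when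
`h` is even (equivalently, `B_h` has Smith normal form `diag(1,…,1,4)` for `h` odd and
`diag(1,…,1,2,2)` for `h` even). -/
theorem stmt12 (h : ℕ) (hh : 1 ≤ h) :
    (Odd h → Nonempty
      (((Fin h → ℤ) ⧸ LinearMap.range (Bmat h).mulVecLin) ≃+ ZMod 4)) ∧
    (Even h → Nonempty
      (((Fin h → ℤ) ⧸ LinearMap.range (Bmat h).mulVecLin) ≃+ (ZMod 2 × ZMod 2))) := by
  obtain ⟨n, rfl⟩ : ∃ n, h = n + 1 := ⟨h - 1, by omega⟩
  constructor
  · intro hodd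
    obtain ⟨p, hp⟩ := hodd
    exact odd_case n (p) (by omega)
  · intro heven
    obtain ⟨p, hp⟩ := heven
    exact even_case n (p - 1) (by omega)
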